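/- arXiv:2605.30629 — 2 statements merged into one kernel-verified Lean document; each statement's English description precedes it below -/
import Mathlib

section
/- The upper incomplete gamma function satisfies Γ(s,x)/(x^{s-1} e^{-x}) → 1 as x → ∞, for any fixed real s. -/
open Filter Set

/-- The upper incomplete gamma function `Γ(s, x) = ∫ₓ^∞ z^{s-1} e^{-z} dz`. -/
noncomputable def uGamma (s x : ℝ) : ℝ := ∫ z in Set.Ioi x, z ^ (s - 1) * Real.exp (-z)

lemma uGamma_cont (s : ℝ) : ContinuousOn (fun z : ℝ => z ^ (s - 1) * Real.exp (-z)) (Ioi 0) := by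
  apply ContinuousOn.mul
  · exact fun z hz => (Real.continuousAt_rpow_const z _ (Or.inl (ne_of_gt hz))).continuousWithinAt
  · exact (Real.continuous_exp.comp continuous_neg).continuousOn

lemma uGamma_integrableOn (s : ℝ) {x : ℝ} (hx : 0 < x) :
    MeasureTheory.IntegrableOn (fun z : ℝ => z ^ (s - 1) * Real.exp (-z)) (Ioi x) := by
  refine integrable_of_isBigO_exp_neg one_half_pos
    ((uGamma_cont s).mono (Ici_subset_Ioi.mpr hx)) ?_
  refine Asymptotics.IsLittleO.isBigO ?_
  rw [Asymptotics.isLittleO_iff_tendsto' (by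
    filter_upwards with z hz
    exact absurd hz (Real.exp_ne_zero _))]
  have h := tendsto_rpow_mul_exp_neg_mul_atTop_nhds_zero (s - 1) (1/2) one_half_pos
  refine h.congr' ?_
  filter_upwards with z
  rw [eq_div_iff (Real.exp_ne_zero _), mul_assoc, ← Real.exp_add]
  ring_nf

lemma uGamma_split (s : ℝ) {u : ℝ} (hu : 1 ≤ u) :
    uGamma s 1 = (∫ z in Ioc 1 u, z ^ (s - 1) * Real.exp (-z)) + uGamma s u := by
  unfold uGamma
  rw [← MeasureTheory.setIntegral_union (Ioc_disjoint_Ioi le_rfl) measurableSet_Ioi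
    ((uGamma_integrableOn s one_pos).mono_set Ioc_subset_Ioi_self)
    (uGamma_integrableOn s (lt_of_lt_of_le one_pos hu)), Ioc_union_Ioi_eq_Ioi hu]

lemma uGamma_hasDerivAt (s : ℝ) {x : ℝ} (hx : 1 < x) :
    HasDerivAt (uGamma s) (-(x ^ (s - 1) * Real.exp (-x))) x := by
  have hx0 : (0:ℝ) < x := lt_trans one_pos hx
  have hFTC : HasDerivAt (fun u => ∫ t in (1:ℝ)..u, t ^ (s - 1) * Real.exp (-t))
      (x ^ (s - 1) * Real.exp (-x)) x := by
    refine intervalIntegral.integral_hasDerivAt_right ?_ ?_ ?_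
    · have hsub : uIcc (1:ℝ) x ⊆ Ioi 0 := by
        rw [uIcc_of_le hx.le]
        exact fun t ht => lt_of_lt_of_le one_pos ht.1
      exact ((uGamma_cont s).mono hsub).intervalIntegrable
    · exact ContinuousAt.stronglyMeasurableAtFilter isOpen_Ioi
        (fun y hy => (uGamma_cont s).continuousAt (Ioi_mem_nhds hy)) x hx0
    · exact (uGamma_cont s).continuousAt (Ioi_mem_nhds hx0)
  have heq : uGamma s =ᶠ[nhds x]
      fun u => uGamma s 1 - ∫ t in (1:ℝ)..u, t ^ (s - 1) * Real.exp (-t) := by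
    filter_upwards [eventually_gt_nhds hx] with u hu
    rw [intervalIntegral.integral_of_le hu.le, MeasureTheory.integral_Ioc_eq_integral_Ioo]
    rw [← MeasureTheory.integral_Ioc_eq_integral_Ioo]
    rw [uGamma_split s hu.le]
    ring
  exact (hFTC.const_sub (uGamma s 1)).congr_of_eventuallyEq heq

/-- For any fixed real `s`, `Γ(s,x)/(x^{s-1} e^{-x}) → 1` as `x → ∞`. -/
theorem stmt10 (s : ℝ) :
    Tendsto (fun x : ℝ => uGamma s x / (x ^ (s - 1) * Real.exp (-x))) atTop (nhds 1) := by
  set g' : ℝ → ℝ := fun x =>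
    ((s - 1) * x ^ (s - 1 - 1)) * Real.exp (-x) + x ^ (s - 1) * (-Real.exp (-x)) with hg'def
  have hgd : ∀ x : ℝ, 0 < x →
      HasDerivAt (fun x : ℝ => x ^ (s - 1) * Real.exp (-x)) (g' x) x := by
    intro x hx
    have h1 : HasDerivAt (fun x : ℝ => x ^ (s - 1)) ((s - 1) * x ^ (s - 1 - 1)) x :=
      Real.hasDerivAt_rpow_const (Or.inl hx.ne')
    have h2 : HasDerivAt (fun x : ℝ => Real.exp (-x)) (-Real.exp (-x)) x := by
      simpa [Function.comp_def] using ((Real.hasDerivAt_exp (-x)).comp x (hasDerivAt_neg x))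
    exact h1.mul h2
  -- g' rewritten
  have hg'eq : ∀ x : ℝ, 0 < x →
      g' x = (x ^ (s - 1) * Real.exp (-x)) * ((s - 1) * x⁻¹ - 1) := by
    intro x hx
    have hpow : x ^ (s - 1) = x ^ (s - 1 - 1) * x := by
      rw [← Real.rpow_add_one hx.ne']; ring_nf
    rw [hg'def]
    simp only []
    rw [hpow]
    field_simp
    ring
  have hne : ∀ᶠ x : ℝ in atTop, g' x ≠ 0 := by
    filter_upwards [eventually_gt_atTop (max 0 (|s - 1| + 1))] with x hx
    have hx0 : 0 < x := lt_of_le_of_lt (le_max_left _ _) hx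
    rw [hg'eq x hx0]
    have h1 : (s - 1) * x⁻¹ - 1 < 0 := by
      have habs : |s - 1| < x := lt_of_lt_of_le (lt_add_one _)
        (le_of_lt (lt_of_le_of_lt (le_max_right _ _) hx))
      have : (s - 1) * x⁻¹ < 1 := by
        rw [← lt_div_iff₀ (by positivity), one_div, inv_inv]
        exact lt_of_le_of_lt (le_abs_self _) habs
      linarith
    have h2 : 0 < x ^ (s - 1) * Real.exp (-x) := by positivity
    exact mul_ne_zero h2.ne' h1.ne
  have hftop : Tendsto (uGamma s) atTop (nhds 0) := by
    have hlim := MeasureTheory.intervalIntegral_tendsto_integral_Ioi 1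
      (uGamma_integrableOn s one_pos) tendsto_id
    have : Tendsto (fun x : ℝ => uGamma s 1 - ∫ t in (1:ℝ)..x, t ^ (s - 1) * Real.exp (-t))
        atTop (nhds (uGamma s 1 - (∫ z in Ioi 1, z ^ (s - 1) * Real.exp (-z)))) :=
      tendsto_const_nhds.sub hlim
    rw [show uGamma s 1 - (∫ z in Ioi 1, z ^ (s - 1) * Real.exp (-z)) = 0 by
      rw [uGamma]; ring] at this
    refine this.congr' ?_
    filter_upwards [eventually_ge_atTop (1:ℝ)] with u hu
    rw [intervalIntegral.integral_of_le hu, uGamma_split s hu]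
    ring
  have hgtop : Tendsto (fun x : ℝ => x ^ (s - 1) * Real.exp (-x)) atTop (nhds 0) := by
    have := tendsto_rpow_mul_exp_neg_mul_atTop_nhds_zero (s - 1) 1 one_pos
    simpa using this
  have hdiv : Tendsto (fun x : ℝ => -(x ^ (s - 1) * Real.exp (-x)) / g' x) atTop (nhds 1) := by
    have h1 : Tendsto (fun x : ℝ => (s - 1) * x⁻¹ - 1) atTop (nhds (-1)) := by
      have := (tendsto_inv_atTop_zero (𝕜 := ℝ)).const_mul (s - 1)
      simpa using this.sub_const 1
    have h2 : Tendsto (fun x : ℝ => -1 / ((s - 1) * x⁻¹ - 1)) atTop (nhds 1) := by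
      have := (tendsto_const_nhds (x := (-1:ℝ))).div h1 (by norm_num)
      simpa [Pi.div_def] using this
    refine h2.congr' ?_
    filter_upwards [eventually_gt_atTop (max 0 (|s - 1| + 1))] with x hx
    have hx0 : 0 < x := lt_of_le_of_lt (le_max_left _ _) hx
    have h2 : 0 < x ^ (s - 1) * Real.exp (-x) := by positivity
    symm
    rw [hg'eq x hx0, neg_div, div_mul_eq_div_div, div_self h2.ne']
    ring
  exact HasDerivAt.lhopital_zero_atTop
    (f' := fun x => -(x ^ (s - 1) * Real.exp (-x))) (g' := g')
    (by filter_upwards [eventually_gt_atTop (1:ℝ)] with x hx using uGamma_hasDerivAt s hx)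
    (by filter_upwards [eventually_gt_atTop (0:ℝ)] with x hx using hgd x hx)
    hne hftop hgtop hdiv
end

section
/- Define S_0(t) = 0 and, for integers d ≥ 1, S_d(t) = e^{−2rt}[I_0(2rt) + I_d(2rt) + 2∑_{k=1}^{d-1} I_k(2rt)], where I_k is the modified Bessel function of the first kind. Then for all d ≥ 1 and t > 0, S_d satisfies the backward Kolmogorov equation d/dt S_d(t) = r (S_{d+1}(t) − 2 S_d(t) + S_{d-1}(t)), with initial condition S_d(0) = 1. -/
open Filter Set

/-- The modified Bessel function of the first kind of integer order `n`:
`I_n(z) = ∑_{m≥0} (z/2)^{2m+n} / (m! (m+n)!)`. -/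
noncomputable def besselI (n : ℕ) (z : ℝ) : ℝ :=
  ∑' m : ℕ, (z / 2) ^ (2 * m + n) / ((m.factorial : ℝ) * (m + n).factorial)

lemma fact_pos' (m : ℕ) : (0:ℝ) < m.factorial := by exact_mod_cast m.factorial_pos

lemma aux_summable (n : ℕ) (c : ℝ) :
    Summable (fun m : ℕ => ((2*m+n : ℕ) : ℝ) * c ^ (2*m+n-1) /
      (2 * ((m.factorial:ℝ) * (m+n).factorial))) := by
  set D : ℝ := |c| + 1 with hD
  have hD0 : 0 < D := by positivity
  have hD1 : 1 ≤ D := by nlinarith [abs_nonneg c]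
  have hcD : |c| ≤ D := by nlinarith
  apply Summable.of_norm_bounded
    (g := fun m : ℕ => ((2*D)^2)^m / m.factorial * (2*D)^n)
  · exact (Real.summable_pow_div_factorial _).mul_right _
  · intro m
    have hf1 := fact_pos' m
    have hf2 := fact_pos' (m+n)
    have hf2' : (1:ℝ) ≤ (m+n).factorial := by exact_mod_cast Nat.one_le_iff_ne_zero.mpr (m+n).factorial_ne_zero
    have h1 : ‖((2*m+n : ℕ) : ℝ) * c ^ (2*m+n-1) / (2 * ((m.factorial:ℝ) * (m+n).factorial))‖
        = ((2*m+n : ℕ) : ℝ) * |c| ^ (2*m+n-1) / (2 * ((m.factorial:ℝ) * (m+n).factorial)) := by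
      rw [Real.norm_eq_abs, abs_div, abs_mul, abs_pow, Nat.abs_cast,
        abs_of_pos (by nlinarith : (0:ℝ) < 2 * ((m.factorial:ℝ) * (m+n).factorial))]
    rw [h1]
    have h2 : ((2*m+n : ℕ) : ℝ) ≤ 2 ^ (2*m+n) := by
      exact_mod_cast le_of_lt Nat.lt_two_pow_self
    have h3 : |c| ^ (2*m+n-1) ≤ D ^ (2*m+n) := by
      calc |c| ^ (2*m+n-1) ≤ D ^ (2*m+n-1) := by gcongr
        _ ≤ D ^ (2*m+n) := pow_le_pow_right₀ hD1 (Nat.sub_le _ _)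
    have h4 : ((2*m+n : ℕ) : ℝ) * |c| ^ (2*m+n-1) / (2 * ((m.factorial:ℝ) * (m+n).factorial))
        ≤ 2 ^ (2*m+n) * D ^ (2*m+n) / (m.factorial:ℝ) := by
      apply div_le_div₀ (by positivity) ?_ (by positivity) (by nlinarith)
      have h5 : (0:ℝ) ≤ |c| ^ (2*m+n-1) := by positivity
      nlinarith [pow_pos (lt_of_lt_of_le one_pos hD1) (2*m+n), pow_nonneg (abs_nonneg c) (2*m+n-1),
        mul_le_mul h2 h3 h5 (by positivity : (0:ℝ) ≤ (2:ℝ)^(2*m+n))]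
    calc _ ≤ 2 ^ (2*m+n) * D ^ (2*m+n) / (m.factorial:ℝ) := h4
      _ = ((2*D)^2)^m / m.factorial * (2*D)^n := by
          rw [← mul_pow, pow_add, pow_mul]; ring

lemma besselI_summable (n : ℕ) (z : ℝ) :
    Summable (fun m : ℕ => (z / 2) ^ (2 * m + n) / ((m.factorial : ℝ) * (m + n).factorial)) := by
  apply Summable.of_norm_bounded
    (g := fun m : ℕ => ((z/2)^2)^m / m.factorial * |z/2|^n)
  · exact (Real.summable_pow_div_factorial ((z/2)^2)).mul_right (|z/2|^n)
  · intro m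
    have hf1 := fact_pos' m
    have hf2 := fact_pos' (m+n)
    have hf2' : (1:ℝ) ≤ (m+n).factorial := by exact_mod_cast Nat.one_le_iff_ne_zero.mpr (m+n).factorial_ne_zero
    have h1 : ‖(z / 2) ^ (2 * m + n) / ((m.factorial : ℝ) * (m + n).factorial)‖
        = ((z/2)^2)^m * |z/2| ^ n / ((m.factorial:ℝ) * (m+n).factorial) := by
      rw [Real.norm_eq_abs, abs_div, abs_pow,
        abs_of_pos (by nlinarith : (0:ℝ) < (m.factorial:ℝ) * (m+n).factorial),
        pow_add, pow_mul, ← abs_pow (z/2) 2, abs_of_nonneg (sq_nonneg (z/2))]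
    rw [h1]
    have h2 : ((z/2)^2)^m / (m.factorial:ℝ) * |z/2|^n = ((z/2)^2)^m * |z/2|^n / (m.factorial:ℝ) := by ring
    rw [h2]
    exact div_le_div₀ (by positivity) le_rfl hf1 (by nlinarith)

lemma besselI_hasDerivAt_raw (n : ℕ) (z : ℝ) :
    HasDerivAt (besselI n)
      (∑' m : ℕ, ((2*m+n : ℕ) : ℝ) * (z/2) ^ (2*m+n-1) /
        (2 * ((m.factorial:ℝ) * (m+n).factorial))) z := by
  have key := hasDerivAt_tsum_of_isPreconnected
    (u := fun m : ℕ => ((2*m+n : ℕ) : ℝ) * ((|z|+1)/2) ^ (2*m+n-1) /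
        (2 * ((m.factorial:ℝ) * (m+n).factorial)))
    (𝕜 := ℝ) (F := ℝ)
    (g := fun (m : ℕ) (y : ℝ) => (y / 2) ^ (2 * m + n) / ((m.factorial : ℝ) * (m + n).factorial))
    (g' := fun (m : ℕ) (y : ℝ) => ((2*m+n : ℕ) : ℝ) * (y/2) ^ (2*m+n-1) /
        (2 * ((m.factorial:ℝ) * (m+n).factorial)))
    (t := Metric.ball (0:ℝ) (|z|+1)) (y₀ := z) (y := z)
    (aux_summable n _) Metric.isOpen_ball ((convex_ball (0:ℝ) (|z|+1)).isPreconnected)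
    ?_ ?_ ?_ (besselI_summable n z) ?_
  · exact key
  · intro m y _
    have h := (((hasDerivAt_id y).div_const 2).pow (2*m+n)).div_const
      ((m.factorial:ℝ) * (m+n).factorial)
    simp only [id] at h
    show HasDerivAt (fun y : ℝ => (y / 2) ^ (2 * m + n) / ((m.factorial:ℝ) * (m + n).factorial))
      (((2*m+n : ℕ) : ℝ) * (y/2) ^ (2*m+n-1) / (2 * ((m.factorial:ℝ) * (m+n).factorial))) y
    have heq : ((2*m+n : ℕ) : ℝ) * (y/2) ^ (2*m+n-1) /
        (2 * ((m.factorial:ℝ) * (m+n).factorial))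
        = ((2*m+n : ℕ) : ℝ) * (y/2) ^ (2*m+n-1) * (1/2) / ((m.factorial:ℝ) * (m+n).factorial) := by
      rw [mul_one_div, div_div]
    rw [heq]
    exact h
  · intro m y hy
    simp only [Metric.mem_ball, dist_zero_right, Real.norm_eq_abs] at hy
    have hf1 := fact_pos' m
    have hf2 := fact_pos' (m+n)
    rw [Real.norm_eq_abs, abs_div, abs_mul, abs_pow, Nat.abs_cast, abs_div, abs_two,
      abs_of_pos (by nlinarith : (0:ℝ) < 2 * ((m.factorial:ℝ) * (m+n).factorial))]
    have hbase : |y|/2 ≤ (|z|+1)/2 := by linarith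
    apply div_le_div₀ (by positivity) ?_ (by nlinarith) le_rfl
    exact mul_le_mul_of_nonneg_left (pow_le_pow_left₀ (by positivity) hbase _) (by positivity)
  · simp only [Metric.mem_ball, dist_zero_right, Real.norm_eq_abs]
    nlinarith [abs_nonneg z]
  · simp only [Metric.mem_ball, dist_zero_right, Real.norm_eq_abs]
    nlinarith [abs_nonneg z]

lemma hasDerivAt_besselI_zero (z : ℝ) : HasDerivAt (besselI 0) (besselI 1 z) z := by
  have h := besselI_hasDerivAt_raw 0 z
  have hsum := aux_summable 0 (z/2)
  have hshift := Summable.tsum_eq_zero_add hsum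
  have h0 : ((2*0+0 : ℕ) : ℝ) * (z/2) ^ (2*0+0-1) / (2 * ((Nat.factorial 0:ℝ) * (0+0).factorial)) = 0 := by
    norm_num
  rw [h0, zero_add] at hshift
  have hterm : ∀ m : ℕ, ((2*(m+1)+0 : ℕ) : ℝ) * (z/2) ^ (2*(m+1)+0-1) /
      (2 * (((m+1).factorial:ℝ) * ((m+1)+0).factorial))
      = (z / 2) ^ (2 * m + 1) / ((m.factorial : ℝ) * (m + 1).factorial) := by
    intro m
    have he : 2*(m+1)+0-1 = 2*m+1 := by omega
    have hf := fact_pos' m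
    have hf1 := fact_pos' (m+1)
    rw [he]
    have hfs : ((m+1).factorial : ℝ) = (m+1) * m.factorial := by
      rw [Nat.factorial_succ]; push_cast; ring
    simp only [hfs]
    field_simp
    push_cast
    ring
  rw [tsum_congr hterm] at hshift
  rw [hshift] at h
  exact h

lemma hasDerivAt_besselI_succ (n : ℕ) (z : ℝ) :
    HasDerivAt (besselI (n+1)) ((besselI n z + besselI (n+2) z) / 2) z := by
  have h := besselI_hasDerivAt_raw (n+1) z
  -- split the term
  set g1 : ℕ → ℝ := fun m => (m:ℝ) * (z/2) ^ (2*m+n) / (2 * ((m.factorial:ℝ) * (m+n+1).factorial)) with hg1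
  set g2 : ℕ → ℝ := fun m => (z/2) ^ (2*m+n) / ((m.factorial:ℝ) * (m+n).factorial) / 2 with hg2
  have hsplit : ∀ m : ℕ, ((2*m+(n+1) : ℕ) : ℝ) * (z/2) ^ (2*m+(n+1)-1) /
      (2 * ((m.factorial:ℝ) * (m+(n+1)).factorial)) = g1 m + g2 m := by
    intro m
    have he : 2*m+(n+1)-1 = 2*m+n := by omega
    have hfs : ((m+n+1).factorial : ℝ) = (m+n+1) * (m+n).factorial := by
      rw [Nat.factorial_succ]; push_cast; ring
    have hf := fact_pos' m
    have hf1 := fact_pos' (m+n)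
    have hplus : m+(n+1) = m+n+1 := by omega
    rw [he, hplus, hg1, hg2]
    simp only [hfs]
    field_simp
    push_cast
    ring
  -- summabilities
  have hs2 : Summable g2 := (besselI_summable n z).div_const 2
  have hsAll : Summable (fun m : ℕ => ((2*m+(n+1) : ℕ) : ℝ) * (z/2) ^ (2*m+(n+1)-1) /
      (2 * ((m.factorial:ℝ) * (m+(n+1)).factorial))) := aux_summable (n+1) (z/2)
  have hs1 : Summable g1 := by
    have hsB := aux_summable (n+1) |z/2|
    apply Summable.of_norm_bounded hsB
    intro m
    have hf := fact_pos' m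
    have hf1 := fact_pos' (m+(n+1))
    have he : 2*m+(n+1)-1 = 2*m+n := by omega
    have hplus : m+(n+1) = m+n+1 := by omega
    rw [he, hplus, hg1]
    simp only
    rw [Real.norm_eq_abs, abs_div, abs_mul, abs_pow, Nat.abs_cast, abs_div, abs_two,
      abs_of_pos (by rw [← hplus]; nlinarith : (0:ℝ) < 2 * ((m.factorial:ℝ) * (m+n+1).factorial))]
    apply div_le_div₀ (by positivity) ?_ (by rw [← hplus]; nlinarith) le_rfl
    have hmle : (m:ℝ) ≤ ((2*m+(n+1) : ℕ):ℝ) := by exact_mod_cast (by omega : m ≤ 2*m+(n+1))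
    apply mul_le_mul_of_nonneg_right hmle (by positivity)
  have htsum : (∑' m : ℕ, ((2*m+(n+1) : ℕ) : ℝ) * (z/2) ^ (2*m+(n+1)-1) /
      (2 * ((m.factorial:ℝ) * (m+(n+1)).factorial))) = (∑' m, g1 m) + (∑' m, g2 m) := by
    rw [tsum_congr hsplit, Summable.tsum_add hs1 hs2]
  -- evaluate tsum g2
  have hg2sum : (∑' m, g2 m) = besselI n z / 2 := by
    simp only [hg2]; exact tsum_div_const
  -- evaluate tsum g1 by shifting
  have hg1shift := Summable.tsum_eq_zero_add hs1
  have hg10 : g1 0 = 0 := by simp [hg1]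
  have hg1term : ∀ m : ℕ, g1 (m+1) = (z / 2) ^ (2 * m + (n+2)) / ((m.factorial : ℝ) * (m + (n+2)).factorial) / 2 := by
    intro m
    have hf := fact_pos' m
    have hf2 := fact_pos' (m+n+2)
    have hfs : ((m+1).factorial : ℝ) = (m+1) * m.factorial := by
      rw [Nat.factorial_succ]; push_cast; ring
    have he1 : 2*(m+1)+n = 2*m+(n+2) := by omega
    have he2 : m+1+n+1 = m+(n+2) := by omega
    rw [hg1]
    simp only
    rw [he1, he2]
    simp only [hfs]
    field_simp
    push_cast
    ring
  have hg1sum : (∑' m, g1 m) = besselI (n+2) z / 2 := by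
    rw [hg1shift, hg10, zero_add, tsum_congr hg1term, tsum_div_const]
    rfl
  rw [htsum, hg1sum, hg2sum] at h
  have : besselI (n+2) z / 2 + besselI n z / 2 = (besselI n z + besselI (n+2) z) / 2 := by ring
  rw [this] at h
  exact h

/-- `S_d(t) = e^{-2rt}[I_0(2rt) + I_d(2rt) + 2 ∑_{k=1}^{d-1} I_k(2rt)]` for `d ≥ 1`,
with `S_0(t) = 0`. -/
noncomputable def Sfun (r : ℝ) (d : ℕ) (t : ℝ) : ℝ :=
  if d = 0 then 0
  else Real.exp (-(2 * r * t)) *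
    (besselI 0 (2 * r * t) + besselI d (2 * r * t) +
      2 * ∑ k ∈ Finset.Ico 1 d, besselI k (2 * r * t))

lemma besselI_zero_val (n : ℕ) : besselI n 0 = if n = 0 then 1 else 0 := by
  unfold besselI
  rw [tsum_eq_single 0 ?_]
  · rcases Nat.eq_zero_or_pos n with h | h
    · subst h; norm_num
    · rw [if_neg (by omega), zero_div, zero_pow (by omega), zero_div]
  · intro m hm
    rw [zero_div, zero_pow (by omega), zero_div]

lemma sum_Ico_shift (f : ℕ → ℝ) (n : ℕ) :
    ∑ k ∈ Finset.Ico 1 (n+1), f k = ∑ k ∈ Finset.range n, f (k+1) := by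
  rw [Finset.sum_Ico_eq_sum_range]
  simp [add_comm]

lemma sum_Ico_eq_range (f : ℕ → ℝ) (n : ℕ) :
    ∑ k ∈ Finset.Ico 1 (n+1), f k = (∑ k ∈ Finset.range (n+1), f k) - f 0 := by
  rw [sum_Ico_shift, Finset.sum_range_succ']
  ring

/-- For all `d ≥ 1` and `t > 0`, `S_d` satisfies the backward Kolmogorov equation
`d/dt S_d(t) = r (S_{d+1}(t) − 2 S_d(t) + S_{d-1}(t))`, with initial condition
`S_d(0) = 1`. -/
theorem stmt14 (r : ℝ) (hr : 0 < r) (d : ℕ) (hd : 1 ≤ d) :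
    (∀ t : ℝ, 0 < t →
      HasDerivAt (fun s => Sfun r d s)
        (r * (Sfun r (d + 1) t - 2 * Sfun r d t + Sfun r (d - 1) t)) t) ∧
    Sfun r d 0 = 1 := by
  obtain ⟨n, rfl⟩ : ∃ n, d = n + 1 := ⟨d - 1, by omega⟩
  constructor
  · intro t ht
    have hinner : HasDerivAt (fun s : ℝ => 2 * r * s) (2 * r) t := by
      simpa using (hasDerivAt_id t).const_mul (2 * r)
    have hexp : HasDerivAt (fun s : ℝ => Real.exp (-(2 * r * s)))
        (Real.exp (-(2 * r * t)) * (-(2 * r))) t :=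
      by have := (Real.hasDerivAt_exp (-(2 * r * t))).comp t hinner.neg; exact this
    have hB : ∀ k : ℕ, HasDerivAt (fun s : ℝ => besselI (k+1) (2 * r * s))
        ((besselI k (2 * r * t) + besselI (k+2) (2 * r * t)) / 2 * (2 * r)) t := fun k =>
      (hasDerivAt_besselI_succ k (2 * r * t)).comp t hinner
    have hB0 : HasDerivAt (fun s : ℝ => besselI 0 (2 * r * s))
        (besselI 1 (2 * r * t) * (2 * r)) t :=
      (hasDerivAt_besselI_zero (2 * r * t)).comp t hinner
    have hSum : HasDerivAt (fun s : ℝ => ∑ k ∈ Finset.Ico 1 (n+1), besselI k (2 * r * s))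
        (∑ k ∈ Finset.Ico 1 (n+1),
          (besselI (k-1) (2 * r * t) + besselI (k+1) (2 * r * t)) / 2 * (2 * r)) t := by
      apply HasDerivAt.fun_sum
      intro k hk
      obtain ⟨j, rfl⟩ : ∃ j, k = j + 1 := ⟨k - 1, by
        have := (Finset.mem_Ico.mp hk).1; omega⟩
      simpa using hB j
    have H := hexp.mul ((hB0.add (hB n)).add ((hSum.const_mul 2)))
    have hfun : (fun s => Sfun r (n+1) s)
        = fun s : ℝ => Real.exp (-(2 * r * s)) *
          (besselI 0 (2 * r * s) + besselI (n+1) (2 * r * s) +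
            2 * ∑ k ∈ Finset.Ico 1 (n+1), besselI k (2 * r * s)) := by
      funext s
      simp [Sfun]
    rw [hfun]
    convert H using 1
    case e'_4 => rfl
    case e'_5 => rfl
    case e'_8 => rfl
    simp only [Pi.add_apply]
    have hder : (∑ k ∈ Finset.Ico 1 (n+1),
          (besselI (k-1) (2 * r * t) + besselI (k+1) (2 * r * t)) / 2 * (2 * r))
        = r * ((∑ k ∈ Finset.range n, besselI k (2 * r * t)) +
            ((∑ k ∈ Finset.range (n+2), besselI k (2 * r * t))
              - besselI 0 (2 * r * t) - besselI 1 (2 * r * t))) := by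
      have e1 : ∑ k ∈ Finset.Ico 1 (n+1),
            (besselI (k-1) (2 * r * t) + besselI (k+1) (2 * r * t)) / 2 * (2 * r)
          = r * ((∑ k ∈ Finset.Ico 1 (n+1), besselI (k-1) (2 * r * t))
              + (∑ k ∈ Finset.Ico 1 (n+1), besselI (k+1) (2 * r * t))) := by
        rw [← Finset.sum_add_distrib, Finset.mul_sum]
        exact Finset.sum_congr rfl fun k _ => by ring
      have e2 : (∑ k ∈ Finset.Ico 1 (n+1), besselI (k-1) (2 * r * t))
          = ∑ k ∈ Finset.range n, besselI k (2 * r * t) := by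
        rw [sum_Ico_shift (fun k => besselI (k-1) (2 * r * t)) n]
        simp
      have e3 : (∑ k ∈ Finset.Ico 1 (n+1), besselI (k+1) (2 * r * t))
          = (∑ k ∈ Finset.range (n+2), besselI k (2 * r * t))
              - besselI 0 (2 * r * t) - besselI 1 (2 * r * t) := by
        rw [sum_Ico_shift (fun k => besselI (k+1) (2 * r * t)) n,
          Finset.sum_range_succ' (fun k => besselI k (2 * r * t)) (n+1),
          Finset.sum_range_succ' (fun k => besselI (k+1) (2 * r * t)) n]
        ring
      rw [e1, e2, e3]
    have hS1 : Sfun r (n+1+1) t = Real.exp (-(2 * r * t)) *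
        (besselI 0 (2 * r * t) + besselI (n+2) (2 * r * t) +
          2 * ((∑ k ∈ Finset.range (n+2), besselI k (2 * r * t)) - besselI 0 (2 * r * t))) := by
      simp only [Sfun, if_neg (by omega : ¬ n+1+1 = 0)]
      rw [(sum_Ico_eq_range (fun k => besselI k (2 * r * t)) (n+1) :
        ∑ k ∈ Finset.Ico 1 (n+1+1), besselI k (2 * r * t) = _)]
    have hS2 : Sfun r (n+1) t = Real.exp (-(2 * r * t)) *
        (besselI 0 (2 * r * t) + besselI (n+1) (2 * r * t) +
          2 * ((∑ k ∈ Finset.range (n+1), besselI k (2 * r * t)) - besselI 0 (2 * r * t))) := by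
      simp only [Sfun, if_neg (by omega : ¬ n+1 = 0)]
      rw [sum_Ico_eq_range (fun k => besselI k (2 * r * t)) n]
    rw [hder, hS1, hS2]
    rcases Nat.eq_zero_or_pos n with hn | hn
    · subst hn
      have h0 : Sfun r (0+1-1) t = 0 := by simp [Sfun]
      rw [h0]
      simp only [Finset.range_zero, Finset.sum_empty, Finset.sum_range_succ]
      norm_num
      ring
    · obtain ⟨p, rfl⟩ : ∃ p, n = p + 1 := ⟨n - 1, by omega⟩
      have h0 : Sfun r (p+1+1-1) t = Real.exp (-(2 * r * t)) *
          (besselI 0 (2 * r * t) + besselI (p+1) (2 * r * t) +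
            2 * ((∑ k ∈ Finset.range (p+1), besselI k (2 * r * t)) - besselI 0 (2 * r * t))) := by
        show Sfun r (p+1) t = _
        simp only [Sfun, if_neg (by omega : ¬ p+1 = 0)]
        rw [sum_Ico_eq_range (fun k => besselI k (2 * r * t)) p]
      rw [h0]
      have hq1 : (∑ k ∈ Finset.range (p+1+2), besselI k (2 * r * t))
          = (∑ k ∈ Finset.range (p+1), besselI k (2 * r * t))
            + besselI (p+1) (2 * r * t) + besselI (p+2) (2 * r * t) := by
        rw [(Finset.sum_range_succ (fun k => besselI k (2 * r * t)) (p+2) :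
          (∑ k ∈ Finset.range (p+1+2), besselI k (2 * r * t)) = _),
          Finset.sum_range_succ (fun k => besselI k (2 * r * t)) (p+1)]
      rw [hq1,
        (sum_Ico_eq_range (fun k => besselI k (2 * r * t)) (p+1) :
          ∑ k ∈ Finset.Ico 1 (p+1+1), besselI k (2 * r * t) = _),
        Finset.sum_range_succ (fun k => besselI k (2 * r * t)) (p+1)]
      ring
  · have h3 : ∑ k ∈ Finset.Ico 1 (n+1), besselI k 0 = 0 := by
      apply Finset.sum_eq_zero
      intro k hk
      rw [besselI_zero_val, if_neg (by have := (Finset.mem_Ico.mp hk).1; omega)]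
    simp [Sfun, besselI_zero_val, h3]
end
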